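/- Assume char k = 2 and let Q be a nondegenerate quadratic form on V and N ∈ 𝓜̃_Q. Then for every odd integer i ≥ 1 and every x ∈ ker N^i one has ⟨x, N^{i−1}x⟩ = 0. -/

import Mathlib

open QuadraticMap

variable {k V : Type*}

/-- The perpendicular of a set `S ⊆ V` with respect to the bilinear form
`⟨x,y⟩ = Q(x+y) - Q x - Q y` associated to a quadratic form `Q`. -/
def perp [Field k] [AddCommGroup V] [Module k V] (Q : QuadraticForm k V) (S : Set V) :
    Submodule k V where
  carrier := {x | ∀ y ∈ S, polar Q x y = 0}
  add_mem' := by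
    intro a b ha hb y hy
    rw [polar_add_left, ha y hy, hb y hy, add_zero]
  zero_mem' := by
    intro y hy
    simp [polar]
  smul_mem' := by
    intro c a ha y hy
    rw [polar_smul_left, ha y hy, smul_zero]

/-- The radical `R = {x ∈ V : ⟨x, V⟩ = 0}` of the bilinear form associated to `Q`. -/
def rad [Field k] [AddCommGroup V] [Module k V] (Q : QuadraticForm k V) : Submodule k V :=
  perp Q Set.univ

/-- `Q` is nondegenerate: its restriction to the radical of the associated bilinear
form is injective. -/
def QNondeg [Field k] [AddCommGroup V] [Module k V] (Q : QuadraticForm k V) : Prop :=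
  Set.InjOn Q (rad Q : Set V)

/-- `𝓜̃_Q`: the set of nilpotent endomorphisms `N` with `Q(Nx) = -⟨x, Nx⟩` for all `x`
(equivalently, `1 + N` is a unipotent element of the orthogonal group `O_Q`). -/
def Mtilde [Field k] [AddCommGroup V] [Module k V] (Q : QuadraticForm k V) :
    Set (Module.End k V) :=
  {N | IsNilpotent N ∧ ∀ x, Q (N x) = - polar Q x (N x)}

/-- in characteristic 2, for `N ∈ 𝓜̃_Q`, every odd `i ≥ 1` and every
`x ∈ ker N^i`, one has `⟨x, N^{i-1} x⟩ = 0`. -/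
private lemma addself_eq_zero (k : Type*) {M : Type*} [Field k] [CharP k 2]
    [AddCommGroup M] [Module k M] (v : M) : v + v = 0 := by
  have h2 : ((2 : ℕ) : k) = 0 := CharP.cast_eq_zero k 2
  calc v + v = (2 : ℕ) • v := (two_nsmul v).symm
    _ = ((2 : ℕ) : k) • v := (Nat.cast_smul_eq_nsmul k 2 v).symm
    _ = 0 := by rw [h2, zero_smul]

theorem stmt13 [Field k] [CharP k 2] [AddCommGroup V] [Module k V] [FiniteDimensional k V]
    (Q : QuadraticForm k V) (hQ : QNondeg Q) (N : Module.End k V) (hN : N ∈ Mtilde Q) :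
    ∀ i : ℕ, Odd i → 1 ≤ i → ∀ x : V, (N ^ i) x = 0 →
      QuadraticMap.polar Q x ((N ^ (i - 1)) x) = 0 := by
  obtain ⟨hnil, hQN⟩ := hN
  have hk : ∀ c : k, c + c = 0 := fun c => by
    have := addself_eq_zero k (M := k) c; simpa using this
  have hV : ∀ v : V, v + v = 0 := addself_eq_zero k
  have hE : ∀ A : Module.End k V, A + A = 0 := addself_eq_zero k
  set g : Module.End k V := 1 + N with hg
  have hgapp : ∀ z : V, g z = z + N z := by
    intro z; simp [hg, LinearMap.add_apply]
  -- Q is g-invariant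
  have hQg : ∀ z, Q (g z) = Q z := by
    intro z
    rw [hgapp, QuadraticMap.map_add (⇑Q) z (N z), hQN z]
    ring
  -- polar is g-invariant
  have hBg : ∀ u v, polar Q (g u) (g v) = polar Q u v := by
    intro u v
    simp only [QuadraticMap.polar]
    rw [← map_add g u v, hQg, hQg, hQg]
  -- nilpotency
  obtain ⟨n, hn⟩ := hnil
  have hNs : N ^ (2 ^ n) = 0 := by
    have h1 : n ≤ 2 ^ n := (Nat.lt_two_pow_self (n := n)).le
    calc N ^ (2 ^ n) = N ^ (2 ^ n - n) * N ^ n := by rw [← pow_add]; congr 1; omega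
      _ = 0 := by rw [hn, mul_zero]
  have hgpow : ∀ t, g ^ (2 ^ t) = 1 + N ^ (2 ^ t) := by
    intro t
    induction t with
    | zero => simp [hg]
    | succ t ih =>
      have h2 : (2 : ℕ) ^ (t + 1) = 2 ^ t * 2 := by ring
      rw [h2, pow_mul, ih, pow_mul]
      set a := N ^ (2 ^ t) with ha
      calc (1 + a) ^ 2 = 1 + a ^ 2 + (a + a) := by noncomm_ring
        _ = 1 + a ^ 2 := by rw [hE, add_zero]
  set s : ℕ := 2 ^ n with hsdef
  have hs1 : 1 ≤ s := Nat.one_le_two_pow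
  have hgs : g ^ s = 1 := by rw [hsdef, hgpow n, hNs, add_zero]
  set h : Module.End k V := g ^ (s - 1) with hh
  have hgh : g * h = 1 := by
    rw [hh, ← pow_succ']
    rw [show s - 1 + 1 = s by omega, hgs]
  have hhg : h * g = 1 := by
    rw [hh, ← pow_succ]
    rw [show s - 1 + 1 = s by omega, hgs]
  have hNg : Commute N g := by
    rw [hg]
    exact (Commute.one_right N).add_right (Commute.refl N)
  have hNh : Commute N h := hNg.pow_right _
  have hh1 : h + 1 = h * N := by
    have e1 : g * (h + 1) = N := by
      rw [mul_add, hgh, mul_one, hg]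
      calc 1 + (1 + N) = (1 + 1) + N := by rw [add_assoc]
        _ = N := by rw [hE 1, zero_add]
    calc h + 1 = (h * g) * (h + 1) := by rw [hhg, one_mul]
      _ = h * (g * (h + 1)) := by rw [mul_assoc]
      _ = h * N := by rw [e1]
  -- adjointness
  have hAdj : ∀ u v, polar Q (N u) v = polar Q u ((h * N) v) := by
    intro u v
    have e1 : N u = g u + u := by
      rw [hgapp]
      calc N u = N u + (u + u) := by rw [hV u, add_zero]
        _ = u + N u + u := by abel
    have e2 : polar Q (g u) v = polar Q u (h v) := by
      have ev : v = g (h v) := by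
        rw [← Module.End.mul_apply, hgh, Module.End.one_apply]
      conv_lhs => rw [ev]
      rw [hBg]
    rw [e1, polar_add_left, e2, ← polar_add_right]
    congr 1
    calc h v + v = (h + 1) v := by rw [LinearMap.add_apply, Module.End.one_apply]
      _ = (h * N) v := by rw [hh1]
  have hAdjPow : ∀ (j : ℕ) (u v : V), polar Q ((N ^ j) u) v = polar Q u (((h * N) ^ j) v) := by
    intro j
    induction j with
    | zero => intro u v; simp
    | succ j ih =>
      intro u v
      have e1 : (N ^ (j + 1)) u = (N ^ j) (N u) := by
        rw [pow_succ, Module.End.mul_apply]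
      rw [e1, ih, hAdj]
      congr 1
      rw [← Module.End.mul_apply, ← pow_succ']
  -- powers of g are 1 + N * P
  have hdecomp : ∀ r : ℕ, ∃ P : Module.End k V, Commute N P ∧ g ^ r = 1 + N * P := by
    intro r
    induction r with
    | zero => exact ⟨0, Commute.zero_right N, by simp⟩
    | succ r ih =>
      obtain ⟨P, hPc, hPe⟩ := ih
      refine ⟨P + 1 + P * N, (hPc.add_right (Commute.one_right N)).add_right
        (hPc.mul_right (Commute.refl N)), ?_⟩
      rw [pow_succ, hPe, hg]
      noncomm_ring
  -- main computation
  intro i hodd hi x hx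
  obtain ⟨m, hm⟩ := hodd
  rw [show i - 1 = 2 * m by omega]
  have hsplit : (N ^ (2 * m)) x = (N ^ m) ((N ^ m) x) := by
    rw [two_mul, pow_add, Module.End.mul_apply]
  rw [hsplit, polar_comm, hAdjPow, (hNh.symm.mul_pow m), hh]
  obtain ⟨P, hPc, hPe⟩ := hdecomp ((s - 1) * m)
  rw [← pow_mul, hPe]
  have e3 : ((1 + N * P) * N ^ m) x = (N ^ m) x + (N * P) ((N ^ m) x) := by
    simp [Module.End.mul_apply, LinearMap.add_apply]
  rw [e3, polar_add_right]
  have e4 : polar Q ((N ^ m) x) ((N ^ m) x) = 0 := by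
    rw [polar_self, two_nsmul]
    exact hk _
  have e5 : polar Q ((N ^ m) x) ((N * P) ((N ^ m) x)) = 0 := by
    have hcm : N * P * N ^ m = N ^ (m + 1) * P := by
      rw [mul_assoc, (hPc.symm.pow_right m).eq, ← mul_assoc, ← pow_succ']
    have e6 : (N * P) ((N ^ m) x) = (N ^ (m + 1)) (P x) := by
      calc (N * P) ((N ^ m) x) = (N * P * N ^ m) x := rfl
        _ = (N ^ (m + 1)) (P x) := by rw [hcm, Module.End.mul_apply]
    rw [e6, polar_comm, hAdjPow]
    have e7 : (((h * N) ^ (m + 1))) ((N ^ m) x) = 0 := by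
      rw [(hNh.symm.mul_pow (m + 1)), Module.End.mul_apply, ← Module.End.mul_apply (N ^ (m+1)), ← pow_add]
      rw [show m + 1 + m = i by omega, hx, map_zero]
    rw [e7, polar_zero_right]
  rw [e4, e5, add_zero]
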